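/- For any envy-freeable allocation A, setting each agent i's subsidy to p*_i := ℓ_A(i), the maximum weight of any directed path in the envy graph G_A starting at vertex i (with the empty path of weight 0 allowed), yields an envy-free solution (A, p*). Moreover, for any other subsidy vector p ∈ ℝ_{≥0}^n such that (A, p) is envy-free, we have p*_i ≤ p_i for all i. -/
import Mathlib


/-- The weight of a directed walk (given as a list of vertices) in a complete
weighted digraph with edge weights `w`. -/
def walkWeight {n : ℕ} (w : Fin n → Fin n → ℝ) (L : List (Fin n)) : ℝ :=
  ((L.zip L.tail).map (fun e => w e.1 e.2)).sum

lemma walkWeight_nil {n} (w : Fin n → Fin n → ℝ) : walkWeight w [] = 0 := rfl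

lemma walkWeight_single {n} (w : Fin n → Fin n → ℝ) (a : Fin n) : walkWeight w [a] = 0 := rfl

lemma walkWeight_cons_cons {n} (w : Fin n → Fin n → ℝ) (a b : Fin n) (L : List (Fin n)) :
    walkWeight w (a :: b :: L) = w a b + walkWeight w (b :: L) := rfl

lemma walkWeight_telescope {n} (w : Fin n → Fin n → ℝ) (p : Fin n → ℝ)
    (hw : ∀ a b, w a b ≤ p a - p b) :
    ∀ (M : List (Fin n)) (a c : Fin n), walkWeight w (a :: M ++ [c]) ≤ p a - p c := by
  intro M
  induction M with
  | nil => intro a c; simpa [walkWeight_cons_cons, walkWeight_single] using hw a c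
  | cons b M ih =>
      intro a c
      have h := ih b c
      have h2 := hw a b
      calc walkWeight w (a :: (b :: M) ++ [c])
          = w a b + walkWeight w (b :: M ++ [c]) := walkWeight_cons_cons ..
        _ ≤ (p a - p b) + (p b - p c) := by linarith
        _ = p a - p c := by ring

lemma walkWeight_split {n} (w : Fin n → Fin n → ℝ) :
    ∀ (X : List (Fin n)) (y : Fin n) (Z : List (Fin n)),
    walkWeight w (X ++ y :: Z) = walkWeight w (X ++ [y]) + walkWeight w (y :: Z) := by
  intro X
  induction X with
  | nil => intro y Z; simp [walkWeight_single]
  | cons a X ih =>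
      intro y Z
      cases X with
      | nil =>
          simp only [List.nil_append, List.cons_append, walkWeight_cons_cons,
            walkWeight_single]
          ring
      | cons b X' =>
          have h1 : walkWeight w ((a :: b :: X') ++ y :: Z)
              = w a b + walkWeight w ((b :: X') ++ y :: Z) := walkWeight_cons_cons ..
          have h2 : walkWeight w ((a :: b :: X') ++ [y])
              = w a b + walkWeight w ((b :: X') ++ [y]) := walkWeight_cons_cons ..
          rw [h1, h2, ih y Z]; ring

/-- For an envy-freeable allocation `A`, setting each agent `i`'s
subsidy to `ℓ i`, the maximum weight of a directed (simple) path in the envy graph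
starting at `i` (the empty path of weight 0 allowed), yields an envy-free solution
`(A, ℓ)`; moreover `ℓ` is pointwise minimal among all nonnegative subsidy vectors
realizing an envy-free solution with `A`. -/
theorem max_path_weight_subsidies {n m : ℕ}
    (v : Fin n → Finset (Fin m) → ℝ)
    (A : Fin n → Finset (Fin m))
    (hdisj : ∀ i j, i ≠ j → Disjoint (A i) (A j))
    (hEFable : ∃ p : Fin n → ℝ, (∀ i, 0 ≤ p i) ∧
        ∀ i j, v i (A j) + p j ≤ v i (A i) + p i)
    (ℓ : Fin n → ℝ)
    (hℓ : ∀ i, IsGreatest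
        {x : ℝ | ∃ L : List (Fin n), L.Nodup ∧ (L = [] ∨ L.head? = some i) ∧
            x = walkWeight (fun a b => v a (A b) - v a (A a)) L} (ℓ i)) :
    (∀ i j, v i (A j) + ℓ j ≤ v i (A i) + ℓ i) ∧
    (∀ p : Fin n → ℝ, (∀ i, 0 ≤ p i) →
        (∀ i j, v i (A j) + p j ≤ v i (A i) + p i) → ∀ i, ℓ i ≤ p i) := by
  set w : Fin n → Fin n → ℝ := fun a b => v a (A b) - v a (A a) with hw
  -- bounding via any EF subsidy vector
  have key : ∀ (p : Fin n → ℝ), (∀ i j, v i (A j) + p j ≤ v i (A i) + p i) →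
      ∀ a b, w a b ≤ p a - p b := by
    intro p hp a b
    have := hp a b
    simp only [hw]
    linarith
  constructor
  · intro i j
    rcases eq_or_ne i j with rfl | hij
    · exact le_refl _
    -- get the witness path for ℓ j
    obtain ⟨L, hLnd, hLhead, hLval⟩ := (hℓ j).1
    have goal : w i j + ℓ j ≤ ℓ i := by
      rcases hLhead with rfl | hhead
      · -- L = [], ℓ j = 0, use path [i, j]
        have hmem : w i j ∈ {x : ℝ | ∃ L : List (Fin n), L.Nodup ∧
            (L = [] ∨ L.head? = some i) ∧ x = walkWeight w L} := by
          refine ⟨[i, j], by simp [hij], Or.inr rfl, ?_⟩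
          simp [walkWeight_cons_cons, walkWeight_single]
        have := (hℓ i).2 hmem
        rw [hLval, walkWeight_nil]
        linarith
      · -- L nonempty with head j
        obtain ⟨M, rfl⟩ : ∃ M, L = j :: M := by
          cases L with
          | nil => simp at hhead
          | cons a M =>
              simp only [List.head?_cons, Option.some.injEq] at hhead
              exact ⟨M, by rw [hhead]⟩
        by_cases hiL : i ∈ j :: M
        · -- split the path at i
          obtain ⟨L1, L2, hsplit⟩ := List.append_of_mem hiL
          -- cycle part is nonpositive
          obtain ⟨p, hp0, hpEF⟩ := hEFable
          have hwle := key p hpEF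
          -- L1 nonempty with head j
          have hL1ne : L1 ≠ [] := by
            intro h
            rw [h] at hsplit
            simp at hsplit
            exact hij hsplit.1.symm
          obtain ⟨c, L1', rfl⟩ := List.exists_cons_of_ne_nil hL1ne
          have hcj : j = c := by
            have := congrArg List.head? hsplit
            simpa using this
          subst hcj
          have hcycle : walkWeight w (i :: (j :: L1') ++ [i]) ≤ p i - p i :=
            walkWeight_telescope w p hwle (j :: L1') i i
          have hcycle' : w i j + walkWeight w ((j :: L1') ++ [i]) ≤ 0 := by
            have : walkWeight w (i :: (j :: L1') ++ [i])
                = w i j + walkWeight w (j :: (L1' ++ [i])) := walkWeight_cons_cons ..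
            rw [this] at hcycle
            simpa using hcycle
          have hsuffix : (i :: L2).Sublist (j :: M) := by
            rw [hsplit]
            exact (List.sublist_append_right _ _)
          have htail_nd : (i :: L2).Nodup := hLnd.sublist hsuffix
          have hmem : walkWeight w (i :: L2) ∈ {x : ℝ | ∃ L : List (Fin n),
              L.Nodup ∧ (L = [] ∨ L.head? = some i) ∧ x = walkWeight w L} :=
            ⟨i :: L2, htail_nd, Or.inr rfl, rfl⟩
          have htail_le : walkWeight w (i :: L2) ≤ ℓ i := (hℓ i).2 hmem
          have hsplitw : walkWeight w (j :: M)
              = walkWeight w ((j :: L1') ++ [i]) + walkWeight w (i :: L2) := by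
            rw [hsplit]
            exact walkWeight_split w (j :: L1') i L2
          rw [hLval, hsplitw]
          linarith
        · -- prepend i
          have hnd : (i :: j :: M).Nodup := List.nodup_cons.mpr ⟨hiL, hLnd⟩
          have hmem : w i j + walkWeight w (j :: M) ∈ {x : ℝ | ∃ L : List (Fin n),
              L.Nodup ∧ (L = [] ∨ L.head? = some i) ∧ x = walkWeight w L} :=
            ⟨i :: j :: M, hnd, Or.inr rfl, (walkWeight_cons_cons ..).symm⟩
          have := (hℓ i).2 hmem
          rw [hLval]
          linarith
    simp only [hw] at goal
    linarith
  · intro p hp0 hpEF i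
    obtain ⟨L, hLnd, hLhead, hLval⟩ := (hℓ i).1
    have hwle := key p hpEF
    rcases hLhead with rfl | hhead
    · rw [hLval, walkWeight_nil]; exact hp0 i
    · obtain ⟨M, rfl⟩ : ∃ M, L = i :: M := by
        cases L with
        | nil => simp at hhead
        | cons a M => simp at hhead; exact ⟨M, by rw [hhead]⟩
      rcases List.eq_nil_or_concat M with rfl | ⟨M', c, rfl⟩
      · rw [hLval, walkWeight_single]; exact hp0 i
      · rw [List.concat_eq_append] at hLval
        have := walkWeight_telescope w p hwle M' i c
        have h0 := hp0 c
        rw [hLval]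
        calc walkWeight w (i :: (M' ++ [c])) ≤ p i - p c := this
          _ ≤ p i := by linarith
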